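/- For any graph G on n vertices, m_G[0,1) · m_G(n−1,n] < n. In particular, at least one of the intervals [0,1) and (n−1,n] contains fewer than √n Laplacian eigenvalues of G. -/

import Mathlib

open scoped Classical

/-- The `i`-th Laplacian eigenvalue of `G` (in the unsorted indexing given by
the spectral theorem applied to the Laplacian matrix). -/
noncomputable def lapEig {V : Type*} [Fintype V] [DecidableEq V] (G : SimpleGraph V) : V → ℝ :=
  (G.posSemidef_lapMatrix (R := ℝ)).isHermitian.eigenvalues

/-- The number of Laplacian eigenvalues of `G` (with multiplicity) satisfying `P`. -/
noncomputable def mCount {V : Type*} [Fintype V] [DecidableEq V] (G : SimpleGraph V)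
    (P : ℝ → Prop) : ℕ :=
  (Finset.univ.filter fun i => P (lapEig G i)).card

/-- `S` is a dominating set of `G`. -/
def IsDomSet {V : Type*} (G : SimpleGraph V) (S : Finset V) : Prop :=
  ∀ v ∉ S, ∃ u ∈ S, G.Adj u v

/-- The domination number of `G`. -/
noncomputable def domNum {V : Type*} [Fintype V] (G : SimpleGraph V) : ℕ :=
  sInf {k | ∃ S : Finset V, IsDomSet G S ∧ S.card = k}

open Finset Matrix

section probe
variable {n : ℕ} (G : SimpleGraph (Fin n))

noncomputable def EVec (i : Fin n) : Fin n → ℝ :=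
  ((G.posSemidef_lapMatrix (R := ℝ)).isHermitian.eigenvectorBasis i : EuclideanSpace ℝ (Fin n))

lemma evec_mulVec (i : Fin n) :
    G.lapMatrix ℝ *ᵥ EVec G i = lapEig G i • EVec G i :=
  (G.posSemidef_lapMatrix (R := ℝ)).isHermitian.mulVec_eigenvectorBasis i

lemma evec_dot_self (i : Fin n) : EVec G i ⬝ᵥ EVec G i = 1 := by
  have h := (G.posSemidef_lapMatrix (R := ℝ)).isHermitian.eigenvectorBasis.orthonormal
  have h2 := (orthonormal_iff_ite (𝕜 := ℝ)).mp h i i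
  simp only [if_true, eq_self_iff_true] at h2
  rw [← h2, PiLp.inner_apply]
  simp [EVec, dotProduct, mul_comm, RCLike.inner_apply, sq]

lemma evec_dot_ne (i j : Fin n) (hij : i ≠ j) : EVec G i ⬝ᵥ EVec G j = 0 := by
  have h := (G.posSemidef_lapMatrix (R := ℝ)).isHermitian.eigenvectorBasis.orthonormal
  have h2 := (orthonormal_iff_ite (𝕜 := ℝ)).mp h i j
  rw [if_neg hij] at h2
  rw [← h2]
  simp [EVec, PiLp.inner_apply, dotProduct, mul_comm, RCLike.inner_apply]

lemma evec_ne_zero (i : Fin n) : EVec G i ≠ 0 := by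
  intro h
  have h2 := evec_dot_self G i
  rw [h] at h2
  simp [dotProduct] at h2

end probe

section toolkit
variable {n : ℕ} (G : SimpleGraph (Fin n))

lemma dot_mulVec_symm {A : Matrix (Fin n) (Fin n) ℝ} (hA : A.IsSymm) (x y : Fin n → ℝ) :
    (A *ᵥ x) ⬝ᵥ y = x ⬝ᵥ (A *ᵥ y) := by
  simp only [dotProduct, Matrix.mulVec, dotProduct, Finset.sum_mul,
    Finset.mul_sum]
  rw [Finset.sum_comm]
  apply Finset.sum_congr rfl; intro i _
  apply Finset.sum_congr rfl; intro j _
  have : A j i = A i j := by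
    conv_lhs => rw [← hA]
    rfl
  rw [this]; ring

lemma sum_evec_zero (i : Fin n) (h : lapEig G i ≠ 0) : ∑ v, EVec G i v = 0 := by
  have h1 : (G.lapMatrix ℝ *ᵥ EVec G i) ⬝ᵥ (fun _ => (1:ℝ))
      = EVec G i ⬝ᵥ (G.lapMatrix ℝ *ᵥ (fun _ => (1:ℝ))) :=
    dot_mulVec_symm (G.isSymm_lapMatrix (R := ℝ)) _ _
  rw [G.lapMatrix_mulVec_const_eq_zero, evec_mulVec] at h1
  simp only [dotProduct_zero, smul_dotProduct] at h1
  have h2 : EVec G i ⬝ᵥ (fun _ => (1:ℝ)) = ∑ v, EVec G i v := by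
    simp [dotProduct]
  rw [h2] at h1
  rcases mul_eq_zero.mp h1 with h3 | h3
  · exact absurd h3 h
  · exact h3

/-- quadratic form of the Laplacian -/
noncomputable def Qf (x : Fin n → ℝ) : ℝ := x ⬝ᵥ (G.lapMatrix ℝ *ᵥ x)

lemma Qf_eq_sum (x : Fin n → ℝ) :
    Qf G x = (∑ i : Fin n, ∑ j : Fin n, if G.Adj i j then (x i - x j)^2 else 0) / 2 := by
  have := G.lapMatrix_toLinearMap₂' (R := ℝ) x
  rw [Matrix.toLinearMap₂'_apply'] at this
  exact this

/-- the summand of the quadratic form, with a fixed decidability instance -/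
noncomputable def qterm (H : SimpleGraph (Fin n)) (x : Fin n → ℝ) (a b : Fin n) : ℝ :=
  if H.Adj a b then (x a - x b)^2 else 0

lemma qterm_nonneg (H : SimpleGraph (Fin n)) (x : Fin n → ℝ) (a b : Fin n) :
    0 ≤ qterm H x a b := by
  unfold qterm
  split <;> positivity

lemma qterm_of_adj (H : SimpleGraph (Fin n)) (x : Fin n → ℝ) {a b : Fin n} (h : H.Adj a b) :
    qterm H x a b = (x a - x b)^2 := by
  simp [qterm, h]

lemma Qf_eq_sum' (H : SimpleGraph (Fin n)) (x : Fin n → ℝ) :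
    Qf H x = (∑ a : Fin n, ∑ b : Fin n, qterm H x a b) / 2 := by
  rw [Qf_eq_sum]
  have h : ∀ a b : Fin n, (if H.Adj a b then (x a - x b)^2 else 0) = qterm H x a b := by
    intro a b
    by_cases hab : H.Adj a b <;> simp [qterm, hab]
  simp_rw [h]

end toolkit

section toolkit2
variable {n : ℕ} (G : SimpleGraph (Fin n))

lemma sum_pairs_sq (x : Fin n → ℝ) :
    ∑ i : Fin n, ∑ j : Fin n, (x i - x j)^2
      = 2 * n * (∑ v, (x v)^2) - 2 * (∑ v, x v)^2 := by
  have inner : ∀ i : Fin n, ∑ j : Fin n, (x i - x j)^2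
      = n * (x i)^2 - 2 * x i * (∑ v, x v) + (∑ v, (x v)^2) := by
    intro i
    have : ∀ j : Fin n, (x i - x j)^2 = (x i)^2 - 2 * x i * x j + (x j)^2 := by
      intro j; ring
    simp_rw [this]
    rw [Finset.sum_add_distrib, Finset.sum_sub_distrib, Finset.sum_const, Finset.card_univ,
      Fintype.card_fin, nsmul_eq_mul]
    have : ∑ j : Fin n, 2 * x i * x j = 2 * x i * ∑ v, x v := by
      rw [Finset.mul_sum]
    rw [this]
  simp_rw [inner]
  rw [Finset.sum_add_distrib, Finset.sum_sub_distrib, Finset.sum_const, Finset.card_univ,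
    Fintype.card_fin, nsmul_eq_mul, ← Finset.mul_sum]
  have h3 : ∑ i : Fin n, 2 * x i * (∑ v, x v) = 2 * (∑ v, x v)^2 := by
    rw [← Finset.sum_mul, ← Finset.mul_sum]
    ring
  rw [h3]
  ring

lemma Qf_add_Qf_compl (x : Fin n → ℝ) :
    Qf G x + Qf Gᶜ x = n * (∑ v, (x v)^2) - (∑ v, x v)^2 := by
  rw [Qf_eq_sum, Qf_eq_sum, ← add_div, div_eq_iff (two_ne_zero)]
  rw [show (↑n * ∑ v : Fin n, x v ^ 2 - (∑ v : Fin n, x v) ^ 2) * 2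
      = ∑ i : Fin n, ∑ j : Fin n, (x i - x j)^2 from by rw [sum_pairs_sq]; ring]
  rw [← Finset.sum_add_distrib]
  apply Finset.sum_congr rfl; intro i _
  rw [← Finset.sum_add_distrib]
  apply Finset.sum_congr rfl; intro j _
  by_cases hij : i = j
  · subst hij
    simp [G.irrefl]
  by_cases hadj : G.Adj i j
  · have h2 : ¬ Gᶜ.Adj i j := by simp [SimpleGraph.compl_adj, hadj]
    simp [hadj, h2]
  · have h2 : Gᶜ.Adj i j := by simp [SimpleGraph.compl_adj, hij, hadj]
    simp [hadj, h2]

end toolkit2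

section core1
variable {n : ℕ} (G : SimpleGraph (Fin n))

/-- From two distinct eigenvalue indices with eigenvalue `< c`, produce a nonzero
eigenvector with eigenvalue `< c` whose entries sum to zero. -/
lemma exists_eigvec_sum_zero {i j : Fin n} (hij : i ≠ j) {c : ℝ}
    (hci : lapEig G i < c) (hcj : lapEig G j < c) :
    ∃ (x : Fin n → ℝ) (lam : ℝ), lam < c ∧ G.lapMatrix ℝ *ᵥ x = lam • x ∧ x ≠ 0 ∧
      ∑ v, x v = 0 := by
  set u := EVec G i with hu
  set v := EVec G j with hv
  by_cases heq : lapEig G i = lapEig G j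
  · by_cases hsu : ∑ w, u w = 0
    · exact ⟨u, lapEig G i, hci, evec_mulVec G i, evec_ne_zero G i, hsu⟩
    · refine ⟨(∑ w, v w) • u - (∑ w, u w) • v, lapEig G i, hci, ?_, ?_, ?_⟩
      · rw [Matrix.mulVec_sub, Matrix.mulVec_smul, Matrix.mulVec_smul,
          evec_mulVec, evec_mulVec, ← heq]
        rw [smul_sub]
        rw [smul_comm (∑ w, v w), smul_comm (∑ w, u w)]
      · intro h0
        have hdv : ((∑ w, v w) • u - (∑ w, u w) • v) ⬝ᵥ v = -(∑ w, u w) := by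
          rw [sub_dotProduct, smul_dotProduct, smul_dotProduct,
            evec_dot_ne G i j hij, evec_dot_self G j]
          simp
        rw [h0] at hdv
        simp only [zero_dotProduct] at hdv
        exact hsu (by linarith)
      · simp only [Pi.sub_apply, Pi.smul_apply, smul_eq_mul, Finset.sum_sub_distrib,
          ← Finset.mul_sum]
        ring
  · by_cases hi0 : lapEig G i ≠ 0
    · exact ⟨u, lapEig G i, hci, evec_mulVec G i, evec_ne_zero G i, sum_evec_zero G i hi0⟩
    · push_neg at hi0
      have hj0 : lapEig G j ≠ 0 := by
        intro h
        exact heq (by rw [hi0, h])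
      exact ⟨v, lapEig G j, hcj, evec_mulVec G j, evec_ne_zero G j, sum_evec_zero G j hj0⟩

/-- CORE 1: if every two distinct vertices have a common neighbor, then at most one
Laplacian eigenvalue is `< 1`. -/
lemma core1 (hCN : ∀ p q : Fin n, p ≠ q → ∃ ct, G.Adj ct p ∧ G.Adj ct q)
    {i j : Fin n} (hij : i ≠ j) (hi : lapEig G i < 1) (hj : lapEig G j < 1) : False := by
  obtain ⟨x, lam, hlam, heig, hx0, hsum⟩ := exists_eigvec_sum_zero G hij hi hj
  -- max and min of x
  have hne : (Finset.univ : Finset (Fin n)).Nonempty := by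
    rcases Function.ne_iff.mp hx0 with ⟨w, -⟩
    exact ⟨w, Finset.mem_univ w⟩
  obtain ⟨p, -, hp⟩ := Finset.exists_max_image Finset.univ x hne
  obtain ⟨q, -, hq⟩ := Finset.exists_min_image Finset.univ x hne
  have hplq : x q < x p := by
    rcases lt_or_ge (x q) (x p) with h | h
    · exact h
    · exfalso
      have hconst : ∀ w, x w = x p := by
        intro w
        have h1 := hp w (Finset.mem_univ w)
        have h2 := hq w (Finset.mem_univ w)
        linarith
      have : ∑ w, x w = n * x p := by
        rw [Finset.sum_congr rfl (fun w _ => hconst w)]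
        simp [Finset.card_univ, mul_comm]
      rw [hsum] at this
      have hn0 : (0:ℝ) < n := by
        have := hne.card_pos
        rw [Finset.card_univ, Fintype.card_fin] at this
        exact_mod_cast this
      have hxp : x p = 0 := by
        rcases mul_eq_zero.mp this.symm with h | h
        · linarith
        · exact h
      apply hx0
      funext w
      rw [hconst w, hxp]; rfl
  have hpq : p ≠ q := fun h => by rw [h] at hplq; exact lt_irrefl _ hplq
  obtain ⟨ct, hcp, hcq⟩ := hCN p q hpq
  -- eigen equation at a vertex w: lam * x w = ∑ over neighbors of (x w - x u)
  have eigat : ∀ w : Fin n, lam * x w = ∑ u ∈ G.neighborFinset w, (x w - x u) := by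
    intro w
    have h1 : (G.lapMatrix ℝ *ᵥ x) w = lam * x w := by
      rw [heig]; simp
    rw [SimpleGraph.lapMatrix_mulVec_apply] at h1
    rw [← h1, Finset.sum_sub_distrib, Finset.sum_const, nsmul_eq_mul,
      SimpleGraph.card_neighborFinset_eq_degree]
  have keyp : lam * x p ≥ x p - x ct := by
    rw [eigat p]
    apply Finset.single_le_sum (f := fun u => x p - x u)
    · intro w _
      have := hp w (Finset.mem_univ w)
      linarith
    · rw [SimpleGraph.mem_neighborFinset]
      exact hcp.symm
  have keyq : -(lam * x q) ≥ x ct - x q := by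
    have h1 : -(lam * x q) = ∑ u ∈ G.neighborFinset q, (x u - x q) := by
      rw [eigat q, ← Finset.sum_neg_distrib]
      apply Finset.sum_congr rfl
      intros; ring
    rw [h1]
    apply Finset.single_le_sum (f := fun u => x u - x q)
    · intro w _
      have := hq w (Finset.mem_univ w)
      linarith
    · rw [SimpleGraph.mem_neighborFinset]
      exact hcq.symm
  nlinarith [keyp, keyq, hplq, hlam]

end core1

section core2
variable {n : ℕ} (G : SimpleGraph (Fin n))

set_option maxHeartbeats 1000000 in
lemma core2 (s t : Fin n)
    (hdom : ∀ v : Fin n, v ≠ s → v ≠ t → (Gᶜ.Adj s v ∨ Gᶜ.Adj t v))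
    {i j : Fin n} (hij : i ≠ j)
    (hi : (n:ℝ) - 1 < lapEig G i) (hj : (n:ℝ) - 1 < lapEig G j) : False := by
  have hnpos : 0 < n := i.pos
  have hn1 : (1:ℝ) ≤ n := by exact_mod_cast hnpos
  have hi0 : lapEig G i ≠ 0 := by intro h; rw [h] at hi; linarith
  have hj0 : lapEig G j ≠ 0 := by intro h; rw [h] at hj; linarith
  set u := EVec G i with hu
  set v := EVec G j with hv
  have hSu : ∑ w, u w = 0 := sum_evec_zero G i hi0
  have hSv : ∑ w, v w = 0 := sum_evec_zero G j hj0
  have hduu : ∑ w, u w * u w = 1 := evec_dot_self G i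
  have hdvv : ∑ w, v w * v w = 1 := evec_dot_self G j
  have hduv : ∑ w, u w * v w = 0 := evec_dot_ne G i j hij
  obtain ⟨α, β, γ, habg, hs, ht⟩ : ∃ α β γ : ℝ, ¬(α = 0 ∧ β = 0 ∧ γ = 0) ∧
      α * u s + β * v s + γ = 0 ∧ α * u t + β * v t + γ = 0 := by
    by_cases hcase : u s = u t ∧ v s = v t
    · refine ⟨0, 1, -v s, by simp, by ring, ?_⟩
      rw [← hcase.2]; ring
    · refine ⟨v s - v t, u t - u s, u s * v t - v s * u t, ?_, by ring, by ring⟩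
      intro ⟨h1, h2, _⟩
      exact hcase ⟨by linarith [sub_eq_zero.mp h2], by linarith [sub_eq_zero.mp h1]⟩
  set x : Fin n → ℝ := fun w => α * u w + β * v w + γ with hxdef
  have hxs : x s = 0 := hs
  have hxt : x t = 0 := ht
  have hSx : ∑ w, x w = γ * n := by
    simp only [hxdef]
    rw [Finset.sum_add_distrib, Finset.sum_add_distrib, ← Finset.mul_sum, ← Finset.mul_sum,
      hSu, hSv, Finset.sum_const, Finset.card_univ, Fintype.card_fin, nsmul_eq_mul]
    ring
  have hx2 : ∑ w, (x w)^2 = α^2 + β^2 + γ^2 * n := by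
    have expand : ∀ w, (x w)^2 = α^2 * (u w * u w) + β^2 * (v w * v w)
        + 2*α*β*(u w * v w) + 2*α*γ*(u w) + 2*β*γ*(v w) + γ^2 := by
      intro w; simp only [hxdef]; ring
    simp_rw [expand]
    rw [Finset.sum_add_distrib, Finset.sum_add_distrib, Finset.sum_add_distrib,
      Finset.sum_add_distrib, Finset.sum_add_distrib]
    rw [← Finset.mul_sum, ← Finset.mul_sum, ← Finset.mul_sum, ← Finset.mul_sum,
      ← Finset.mul_sum, hSu, hSv, hduu, hdvv, hduv, Finset.sum_const, Finset.card_univ,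
      Fintype.card_fin, nsmul_eq_mul]
    ring
  have hLx : G.lapMatrix ℝ *ᵥ x = fun w => α * lapEig G i * u w + β * lapEig G j * v w := by
    have hx' : x = (α • u) + (β • v) + (γ • fun _ => (1:ℝ)) := by
      funext w; simp [hxdef]
    rw [hx', Matrix.mulVec_add, Matrix.mulVec_add, Matrix.mulVec_smul, Matrix.mulVec_smul,
      Matrix.mulVec_smul, evec_mulVec, evec_mulVec, G.lapMatrix_mulVec_const_eq_zero]
    funext w
    simp [mul_assoc, hu, hv]
  have hQx : Qf G x = α^2 * lapEig G i + β^2 * lapEig G j := by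
    unfold Qf
    rw [hLx]
    have : x ⬝ᵥ (fun w => α * lapEig G i * u w + β * lapEig G j * v w)
        = α * lapEig G i * (∑ w, x w * u w) + β * lapEig G j * (∑ w, x w * v w) := by
      simp only [dotProduct, Finset.mul_sum]
      rw [← Finset.sum_add_distrib]
      apply Finset.sum_congr rfl; intros; ring
    rw [this]
    have hxu : ∑ w, x w * u w = α := by
      have expand : ∀ w, x w * u w = α * (u w * u w) + β * (u w * v w) + γ * u w := by
        intro w; simp only [hxdef]; ring
      simp_rw [expand]
      rw [Finset.sum_add_distrib, Finset.sum_add_distrib, ← Finset.mul_sum, ← Finset.mul_sum,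
        ← Finset.mul_sum, hSu, hduu, hduv, mul_zero]
      ring
    have hxv : ∑ w, x w * v w = β := by
      have expand : ∀ w, x w * v w = α * (u w * v w) + β * (v w * v w) + γ * v w := by
        intro w; simp only [hxdef]; ring
      simp_rw [expand]
      rw [Finset.sum_add_distrib, Finset.sum_add_distrib, ← Finset.mul_sum, ← Finset.mul_sum,
        ← Finset.mul_sum, hSv, hdvv, hduv, mul_zero]
      ring
    rw [hxu, hxv]
    ring
  have habne : ¬(α = 0 ∧ β = 0) := by
    rintro ⟨ha, hb⟩
    apply habg
    refine ⟨ha, hb, ?_⟩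
    have := hxs
    simp only [hxdef, ha, hb, zero_mul, zero_add] at this
    exact this
  have hQc_eq : Qf Gᶜ x = α^2 * (n - lapEig G i) + β^2 * (n - lapEig G j) := by
    have hid := Qf_add_Qf_compl G x
    rw [hQx, hx2, hSx] at hid
    nlinarith [hid]
  have hupper : Qf Gᶜ x < α^2 + β^2 := by
    rw [hQc_eq]
    rcases not_and_or.mp habne with ha | hb
    · have h1 : 0 < α^2 := by positivity
      nlinarith [sq_nonneg β]
    · have h1 : 0 < β^2 := by positivity
      nlinarith [sq_nonneg α]
  -- lower bound : Qf Gᶜ x ≥ ∑ w, x w ^ 2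
  have hlower : ∑ w, (x w)^2 ≤ Qf Gᶜ x := by
    rw [Qf_eq_sum']
    rw [le_div_iff₀ two_pos]
    set τ : Fin n → Fin n := fun w => if Gᶜ.Adj s w then s else t with hτdef
    have hτ : ∀ w, w ≠ s → w ≠ t → Gᶜ.Adj (τ w) w ∧ x (τ w) = 0 := by
      intro w hws hwt
      rcases hdom w hws hwt with h | h
      · constructor
        · simp only [hτdef, if_pos h]; exact h
        · simp only [hτdef, if_pos h]; exact hxs
      · by_cases hsw : Gᶜ.Adj s w
        · exact ⟨by simp only [hτdef, if_pos hsw]; exact hsw,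
            by simp only [hτdef, if_pos hsw]; exact hxs⟩
        · exact ⟨by simp only [hτdef, if_neg hsw]; exact h,
            by simp only [hτdef, if_neg hsw]; exact hxt⟩
    have hτmem : ∀ w, τ w = s ∨ τ w = t := by
      intro w
      simp only [hτdef]
      split
      · exact Or.inl rfl
      · exact Or.inr rfl
    set S : Finset (Fin n) := Finset.univ.filter (fun w => ¬(w = s ∨ w = t)) with hSdef
    have hSmem : ∀ w, w ∈ S ↔ (w ≠ s ∧ w ≠ t) := by
      intro w
      simp only [hSdef, Finset.mem_filter, Finset.mem_univ, true_and, not_or]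
    have hsum_split : ∑ w, (x w)^2 = ∑ w ∈ S, (x w)^2 := by
      rw [← Finset.sum_filter_add_sum_filter_not Finset.univ
        (fun w => ¬(w = s ∨ w = t)) (fun w => (x w)^2)]
      have h0 : ∑ w ∈ Finset.univ.filter (fun w => ¬¬(w = s ∨ w = t)), (x w)^2 = 0 := by
        apply Finset.sum_eq_zero
        intro w hw
        simp only [Finset.mem_filter, not_not] at hw
        rcases hw.2 with h | h <;> subst h
        · rw [hxs]; ring
        · rw [hxt]; ring
      rw [h0, add_zero]
    have hC : ∑ a ∈ S, (x a)^2 ≤ ∑ a ∈ S, ∑ b, qterm Gᶜ x a b := by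
      apply Finset.sum_le_sum
      intro a ha
      rw [hSmem] at ha
      obtain ⟨hadj, hτx⟩ := hτ a ha.1 ha.2
      calc (x a)^2 = qterm Gᶜ x a (τ a) := by
            rw [qterm_of_adj Gᶜ x hadj.symm, hτx]; ring
        _ ≤ ∑ b, qterm Gᶜ x a b :=
            Finset.single_le_sum (fun b _ => qterm_nonneg Gᶜ x a b) (Finset.mem_univ (τ a))
    have hD : ∑ a ∈ S, (x a)^2
        ≤ ∑ a ∈ Finset.univ.filter (fun w => ¬¬(w = s ∨ w = t)), ∑ b, qterm Gᶜ x a b := by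
      have hmap : ∀ w ∈ S, τ w ∈ Finset.univ.filter (fun w => ¬¬(w = s ∨ w = t)) := by
        intro w _
        simp only [Finset.mem_filter, Finset.mem_univ, true_and, not_not]
        exact hτmem w
      have hfib := Finset.sum_fiberwise_of_maps_to hmap (fun w => (x w)^2)
      rw [← hfib]
      apply Finset.sum_le_sum
      intro a _
      calc ∑ w ∈ S.filter (fun w => τ w = a), (x w)^2
          = ∑ w ∈ S.filter (fun w => τ w = a), qterm Gᶜ x a w := by
            apply Finset.sum_congr rfl
            intro w hw
            simp only [Finset.mem_filter] at hw
            have hwS := (hSmem w).mp hw.1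
            obtain ⟨hadj, hτx⟩ := hτ w hwS.1 hwS.2
            rw [← hw.2, qterm_of_adj Gᶜ x hadj, hτx]
            ring
        _ ≤ ∑ b, qterm Gᶜ x a b := by
            apply Finset.sum_le_sum_of_subset_of_nonneg
            · intro w _
              exact Finset.mem_univ w
            · intro b _ _
              exact qterm_nonneg Gᶜ x a b
    have hsplit2 : ∑ a, ∑ b, qterm Gᶜ x a b
        = ∑ a ∈ S, (∑ b, qterm Gᶜ x a b)
          + ∑ a ∈ Finset.univ.filter (fun w => ¬¬(w = s ∨ w = t)), ∑ b, qterm Gᶜ x a b := by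
      rw [Finset.sum_filter_add_sum_filter_not Finset.univ
        (fun w => ¬(w = s ∨ w = t)) (fun a => ∑ b, qterm Gᶜ x a b)]
    rw [hsum_split, hsplit2]
    linarith [hC, hD]
  have hg2 : 0 ≤ γ^2 * n := by
    apply mul_nonneg (sq_nonneg γ)
    linarith
  linarith [hlower, hupper, hx2, hg2]

end core2

section glue
variable {n : ℕ} (G : SimpleGraph (Fin n))

lemma mCount_two {P : ℝ → Prop} (h2 : 2 ≤ mCount G P) :
    ∃ i j : Fin n, i ≠ j ∧ P (lapEig G i) ∧ P (lapEig G j) := by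
  unfold mCount at h2
  obtain ⟨i, hi, j, hj, hij⟩ := Finset.one_lt_card.mp h2
  exact ⟨i, j, hij, (Finset.mem_filter.mp hi).2, (Finset.mem_filter.mp hj).2⟩

lemma mCount_add_le {P Q : ℝ → Prop}
    (hdisj : ∀ r : ℝ, ¬(P r ∧ Q r)) : mCount G P + mCount G Q ≤ n := by
  unfold mCount
  classical
  have hd : Disjoint (Finset.univ.filter fun i => P (lapEig G i))
      (Finset.univ.filter fun i => Q (lapEig G i)) := by
    rw [Finset.disjoint_left]
    intro i hi1 hi2
    exact hdisj _ ⟨(Finset.mem_filter.mp hi1).2, (Finset.mem_filter.mp hi2).2⟩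
  calc (Finset.univ.filter fun i => P (lapEig G i)).card
        + (Finset.univ.filter fun i => Q (lapEig G i)).card
      = ((Finset.univ.filter fun i => P (lapEig G i))
        ∪ (Finset.univ.filter fun i => Q (lapEig G i))).card :=
        (Finset.card_union_of_disjoint hd).symm
    _ ≤ (Finset.univ : Finset (Fin n)).card := Finset.card_le_univ _
    _ = n := by rw [Finset.card_univ, Fintype.card_fin]

lemma mCount_eq_zero {P : ℝ → Prop} (h : ∀ i : Fin n, ¬ P (lapEig G i)) :
    mCount G P = 0 := by
  unfold mCount
  rw [Finset.card_eq_zero, Finset.filter_eq_empty_iff]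
  intro i _
  exact h i

lemma lapEig_fin_one (G1 : SimpleGraph (Fin 1)) (i : Fin 1) : lapEig G1 i = 0 := by
  have hnb : ∀ a : Fin 1, G1.neighborFinset a = ∅ := by
    intro a
    ext w
    simp only [SimpleGraph.mem_neighborFinset, Finset.notMem_empty, iff_false]
    intro h
    have haw : a = w := Subsingleton.elim a w
    rw [haw] at h
    exact G1.irrefl h
  obtain ⟨a, ha⟩ : ∃ a, EVec G1 i a ≠ 0 := Function.ne_iff.mp (evec_ne_zero G1 i)
  have h := congrFun (evec_mulVec G1 i) a
  rw [SimpleGraph.lapMatrix_mulVec_apply, hnb] at h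
  have hdeg : G1.degree a = 0 := by
    rw [← SimpleGraph.card_neighborFinset_eq_degree, hnb]
    rfl
  rw [hdeg] at h
  simp only [Finset.sum_empty, Nat.cast_zero, zero_mul, sub_zero, Pi.smul_apply,
    smul_eq_mul] at h
  rcases mul_eq_zero.mp h.symm with h1 | h1
  · exact h1
  · exact absurd h1 ha

end glue


/-- $m_G[0,1) \cdot m_G(n-1,n] < n$; in particular at least one of the intervals
$[0,1)$ and $(n-1,n]$ contains fewer than $\sqrt n$ Laplacian eigenvalues. -/
theorem mCount_mul_mCount_lt {n : ℕ} (hn : 0 < n) (G : SimpleGraph (Fin n)) :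
    mCount G (fun x => 0 ≤ x ∧ x < 1) *
      mCount G (fun x => (n : ℝ) - 1 < x ∧ x ≤ (n : ℝ)) < n ∧
    ((mCount G (fun x => 0 ≤ x ∧ x < 1) : ℝ) < Real.sqrt n ∨
      (mCount G (fun x => (n : ℝ) - 1 < x ∧ x ≤ (n : ℝ)) : ℝ) < Real.sqrt n) := by
  have main : mCount G (fun x => 0 ≤ x ∧ x < 1) *
      mCount G (fun x => (n : ℝ) - 1 < x ∧ x ≤ (n : ℝ)) < n := by
    by_cases hn2 : 2 ≤ n
    · -- main case
      have hdisj : ∀ r : ℝ, ¬((0 ≤ r ∧ r < 1) ∧ ((n : ℝ) - 1 < r ∧ r ≤ (n : ℝ))) := by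
        rintro r ⟨⟨-, h1⟩, h2, -⟩
        have : (2:ℝ) ≤ n := by exact_mod_cast hn2
        linarith
      have hab := mCount_add_le G hdisj
      have hkey : 2 ≤ mCount G (fun x => (n : ℝ) - 1 < x ∧ x ≤ (n : ℝ)) →
          mCount G (fun x => 0 ≤ x ∧ x < 1) ≤ 1 := by
        intro hB
        by_contra hA
        push_neg at hA
        obtain ⟨i, j, hij, hPi, hPj⟩ := mCount_two G hB
        obtain ⟨k, l, hkl, hPk, hPl⟩ := mCount_two G
          (by omega : 2 ≤ mCount G (fun x => 0 ≤ x ∧ x < 1))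
        have hCN : ∀ p q : Fin n, p ≠ q → ∃ c, G.Adj c p ∧ G.Adj c q := by
          intro p q hpq
          by_contra hno
          push_neg at hno
          refine core2 G p q ?_ hij hPi.1 hPj.1
          intro v hvp hvq
          by_cases h1 : G.Adj p v
          · right
            rw [SimpleGraph.compl_adj]
            exact ⟨Ne.symm hvq, fun h2 => (hno v h1.symm) h2.symm⟩
          · left
            rw [SimpleGraph.compl_adj]
            exact ⟨Ne.symm hvp, h1⟩
        exact core1 G hCN hkl hPk.2 hPl.2
      rcases Nat.lt_or_ge (mCount G (fun x => (n : ℝ) - 1 < x ∧ x ≤ (n : ℝ))) 2 with hb | hb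
      · interval_cases h : (mCount G (fun x => (n : ℝ) - 1 < x ∧ x ≤ (n : ℝ)))
        · simpa using hn
        · omega
      · have hA1 := hkey hb
        rcases Nat.le_one_iff_eq_zero_or_eq_one.mp hA1 with h | h
        · rw [h, zero_mul]; exact hn
        · rw [h, one_mul]; omega
    · -- n = 1
      have hn1 : n = 1 := by omega
      subst hn1
      have hz : mCount G (fun x => (1 : ℝ) - 1 < x ∧ x ≤ (1 : ℝ)) = 0 := by
        apply mCount_eq_zero
        intro i hP
        rw [lapEig_fin_one G i] at hP
        simp at hP
      rw [show ((1:ℕ) : ℝ) = (1:ℝ) by norm_num] at *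
      rw [hz, mul_zero]
      exact hn
  refine ⟨main, ?_⟩
  by_contra hcon
  push_neg at hcon
  obtain ⟨h1, h2⟩ := hcon
  have hsq : (n:ℝ) ≤ (mCount G (fun x => 0 ≤ x ∧ x < 1) : ℝ) *
      (mCount G (fun x => (n : ℝ) - 1 < x ∧ x ≤ (n : ℝ)) : ℝ) := by
    calc (n:ℝ) = Real.sqrt n * Real.sqrt n := (Real.mul_self_sqrt (Nat.cast_nonneg n)).symm
      _ ≤ _ := mul_le_mul h1 h2 (Real.sqrt_nonneg n) (Nat.cast_nonneg _)
  have hlt : ((mCount G (fun x => 0 ≤ x ∧ x < 1) * mCount G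
      (fun x => (n : ℝ) - 1 < x ∧ x ≤ (n : ℝ)) : ℕ) : ℝ) < (n : ℝ) := by
    exact_mod_cast main
  push_cast at hlt
  linarith
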